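/- The system of PDEs (1±|z|²)∂a/∂z ± 2wz̄ ∂a/∂w = 0 and (1±|z|²)² a² ∂a/∂w ∓ 2w̄ a ± 2zw̄(1±|z|²)∂a/∂z + 4|w|²|z|² ∂a/∂w = 0, for a real positive C¹ function a(z,w) on a connected open subset of ℂ², is satisfied by a = sqrt(c1 ± 4|w|²/(1±|z|²)²) for any constant c1 > 0. -/

import Mathlib

open Complex

/-- Wirtinger derivative `∂/∂z` (first coordinate) of `f : ℂ² → ℂ`. -/
noncomputable def dz (f : ℂ × ℂ → ℂ) (p : ℂ × ℂ) : ℂ :=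
  (1 / 2) * (fderiv ℝ f p (1, 0) - Complex.I * fderiv ℝ f p (Complex.I, 0))

/-- Wirtinger derivative `∂/∂z̄`. -/
noncomputable def dzb (f : ℂ × ℂ → ℂ) (p : ℂ × ℂ) : ℂ :=
  (1 / 2) * (fderiv ℝ f p (1, 0) + Complex.I * fderiv ℝ f p (Complex.I, 0))

/-- Wirtinger derivative `∂/∂w` (second coordinate). -/
noncomputable def dw (f : ℂ × ℂ → ℂ) (p : ℂ × ℂ) : ℂ :=
  (1 / 2) * (fderiv ℝ f p (0, 1) - Complex.I * fderiv ℝ f p (0, Complex.I))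

/-- Wirtinger derivative `∂/∂w̄`. -/
noncomputable def dwb (f : ℂ × ℂ → ℂ) (p : ℂ × ℂ) : ℂ :=
  (1 / 2) * (fderiv ℝ f p (0, 1) + Complex.I * fderiv ℝ f p (0, Complex.I))

/-- A complex vector field on `ℂ²`, given by its coefficients in the frame
`(∂_z, ∂_z̄, ∂_w, ∂_w̄)`. -/
abbrev VF := ℂ × ℂ → ℂ × ℂ × ℂ × ℂ

/-- Action of a complex vector field on a function. -/
noncomputable def appVF (X : VF) (f : ℂ × ℂ → ℂ) (p : ℂ × ℂ) : ℂ :=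
  (X p).1 * dz f p + (X p).2.1 * dzb f p + (X p).2.2.1 * dw f p +
    (X p).2.2.2 * dwb f p

/-- Lie bracket of complex vector fields (in coefficients). -/
noncomputable def bracketVF (X Y : VF) : VF := fun p =>
  (appVF X (fun q => (Y q).1) p - appVF Y (fun q => (X q).1) p,
   appVF X (fun q => (Y q).2.1) p - appVF Y (fun q => (X q).2.1) p,
   appVF X (fun q => (Y q).2.2.1) p - appVF Y (fun q => (X q).2.2.1) p,
   appVF X (fun q => (Y q).2.2.2) p - appVF Y (fun q => (X q).2.2.2) p)

/-- Conjugate of a complex vector field: coefficients are conjugated and the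
frame vectors `∂_z ↔ ∂_z̄`, `∂_w ↔ ∂_w̄` are swapped. -/
noncomputable def conjVF (X : VF) : VF := fun p =>
  ((starRingEnd ℂ) (X p).2.1, (starRingEnd ℂ) (X p).1,
   (starRingEnd ℂ) (X p).2.2.2, (starRingEnd ℂ) (X p).2.2.1)

/-- The horizontal lift `X₁ = ∂_z + ε(2wz̄)/(1+ε|z|²) ∂_w`. -/
noncomputable def X₁ (ε : ℝ) : VF := fun p =>
  (1, 0, (ε : ℂ) * 2 * p.2 * (starRingEnd ℂ) p.1 /
    ((1 + ε * Complex.normSq p.1 : ℝ) : ℂ), 0)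

/-- The horizontal lift `X₂ = ∂_z̄ + ε(2w̄z)/(1+ε|z|²) ∂_w̄`. -/
noncomputable def X₂ (ε : ℝ) : VF := fun p =>
  (0, 1, 0, (ε : ℂ) * 2 * (starRingEnd ℂ) p.2 * p.1 /
    ((1 + ε * Complex.normSq p.1 : ℝ) : ℂ))

/-- The weight function `a = sqrt (c1 + 4ε|w|²/(1+ε|z|²)²)`, as a `ℂ`-valued
function on `ℂ²`. -/
noncomputable def wfun (ε c1 : ℝ) (p : ℂ × ℂ) : ℂ :=
  ((Real.sqrt (c1 + ε * 4 * Complex.normSq p.2 /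
    (1 + ε * Complex.normSq p.1) ^ 2) : ℝ) : ℂ)

lemma hasFDerivAt_normSq' (z : ℂ) : HasFDerivAt Complex.normSq
    ((2*z.re) • Complex.reCLM + (2*z.im) • Complex.imCLM) z := by
  have h : Complex.normSq = fun w : ℂ => w.re*w.re + w.im*w.im := funext fun w => Complex.normSq_apply w
  rw [h]
  have := ((Complex.reCLM.hasFDerivAt (x:=z)).mul (Complex.reCLM.hasFDerivAt (x:=z))).add
    ((Complex.imCLM.hasFDerivAt (x:=z)).mul (Complex.imCLM.hasFDerivAt (x:=z)))
  refine this.congr_fderiv ?_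
  ext w <;> (simp <;> ring)

lemma fderiv_wfun (ε c1 : ℝ) (p : ℂ × ℂ)
    (hz : 0 < (1 + ε * Complex.normSq p.1))
    (ha : 0 < (c1 + ε * 4 * Complex.normSq p.2 / (1 + ε * Complex.normSq p.1) ^ 2))
    (h : ℂ × ℂ) :
    fderiv ℝ (wfun ε c1) p h =
    Complex.ofReal (1 / (2 * Real.sqrt (c1 + ε * 4 * Complex.normSq p.2 / (1 + ε * Complex.normSq p.1) ^ 2)) *
        (ε * 4 * Complex.normSq p.2 *
            (-(((1 + ε * Complex.normSq p.1) * (1 + ε * Complex.normSq p.1)) ^ 2)⁻¹ *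
              ((1 + ε * Complex.normSq p.1) * (ε * (2 * p.1.re * h.1.re + 2 * p.1.im * h.1.im)) +
                (1 + ε * Complex.normSq p.1) * (ε * (2 * p.1.re * h.1.re + 2 * p.1.im * h.1.im)))) +
          ((1 + ε * Complex.normSq p.1) * (1 + ε * Complex.normSq p.1))⁻¹ *
            (ε * 4 * (2 * p.2.re * h.2.re + 2 * p.2.im * h.2.im)))) := by
  have hz' := hz.ne'
  have ha' := ha.ne'
  have h1 : HasFDerivAt (fun q : ℂ × ℂ => Complex.normSq q.1)
      (((2*p.1.re) • Complex.reCLM + (2*p.1.im) • Complex.imCLM).comp (ContinuousLinearMap.fst ℝ ℂ ℂ)) p :=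
    (hasFDerivAt_normSq' p.1).comp p hasFDerivAt_fst
  have h2 : HasFDerivAt (fun q : ℂ × ℂ => Complex.normSq q.2)
      (((2*p.2.re) • Complex.reCLM + (2*p.2.im) • Complex.imCLM).comp (ContinuousLinearMap.snd ℝ ℂ ℂ)) p :=
    (hasFDerivAt_normSq' p.2).comp p hasFDerivAt_snd
  have hD1 := (h1.const_mul ε).const_add 1
  have hDen := hD1.mul hD1
  have hDenne : ((1 + ε * Complex.normSq p.1) * (1 + ε * Complex.normSq p.1)) ≠ 0 := mul_ne_zero hz' hz'
  have hInv := (hasDerivAt_inv hDenne).comp_hasFDerivAt p hDen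
  have hNum := h2.const_mul (ε*4)
  have hg := ((hNum.mul hInv).const_add c1)
  have hg2 : HasFDerivAt (fun q : ℂ × ℂ => c1 + ε * 4 * Complex.normSq q.2 / (1 + ε * Complex.normSq q.1)^2) _ p :=
    hg.congr_of_eventuallyEq (Filter.Eventually.of_forall fun q => by
      simp [Function.comp, div_eq_mul_inv, pow_two])
  have hsq := hg2.sqrt ha'
  have hw := Complex.ofRealCLM.hasFDerivAt.comp p hsq
  have hfd : fderiv ℝ (wfun ε c1) p = _ := hw.fderiv
  rw [hfd]
  simp only [ContinuousLinearMap.coe_comp', Function.comp_apply, ContinuousLinearMap.coe_smul',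
    Pi.smul_apply, ContinuousLinearMap.add_apply, ContinuousLinearMap.coe_fst',
    ContinuousLinearMap.coe_snd', Complex.ofRealCLM_apply, Complex.reCLM_apply, Complex.imCLM_apply,
    ContinuousLinearMap.smul_apply, smul_eq_mul, Pi.mul_apply]

set_option maxHeartbeats 1000000 in
lemma dz_wfun (ε c1 : ℝ) (p : ℂ × ℂ)
    (hz : 0 < (1 + ε * Complex.normSq p.1))
    (ha : 0 < (c1 + ε * 4 * Complex.normSq p.2 / (1 + ε * Complex.normSq p.1) ^ 2)) :
    dz (wfun ε c1) p =
      Complex.ofReal (-(ε * ε) * 4 * Complex.normSq p.2 /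
        (Real.sqrt (c1 + ε * 4 * Complex.normSq p.2 / (1 + ε * Complex.normSq p.1) ^ 2) *
          (1 + ε * Complex.normSq p.1) ^ 3)) * (starRingEnd ℂ) p.1 := by
  have hs : (Real.sqrt (c1 + ε * 4 * Complex.normSq p.2 / (1 + ε * Complex.normSq p.1) ^ 2) : ℂ) ≠ 0 :=
    Complex.ofReal_ne_zero.2 (Real.sqrt_pos.2 ha).ne'
  have hD : ((1 + ε * Complex.normSq p.1 : ℝ) : ℂ) ≠ 0 := Complex.ofReal_ne_zero.2 hz.ne'
  push_cast at hD
  rw [dz, fderiv_wfun ε c1 p hz ha, fderiv_wfun ε c1 p hz ha,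
    show (starRingEnd ℂ) p.1 = (p.1.re : ℂ) - p.1.im * I from by simp [Complex.ext_iff]]
  simp only [Complex.one_re, Complex.one_im, Complex.I_re, Complex.I_im, Complex.zero_re,
    Complex.zero_im, mul_one, mul_zero, zero_mul, add_zero, zero_add]
  set u := Complex.normSq p.1 with hu
  set v := Complex.normSq p.2 with hv
  set S := Real.sqrt (c1 + ε * 4 * v / (1 + ε * u) ^ 2) with hSdef
  clear_value S
  clear hSdef
  push_cast
  field_simp
  ring

set_option maxHeartbeats 1000000 in
lemma dw_wfun (ε c1 : ℝ) (p : ℂ × ℂ)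
    (hz : 0 < (1 + ε * Complex.normSq p.1))
    (ha : 0 < (c1 + ε * 4 * Complex.normSq p.2 / (1 + ε * Complex.normSq p.1) ^ 2)) :
    dw (wfun ε c1) p =
      Complex.ofReal (ε * 2 /
        (Real.sqrt (c1 + ε * 4 * Complex.normSq p.2 / (1 + ε * Complex.normSq p.1) ^ 2) *
          (1 + ε * Complex.normSq p.1) ^ 2)) * (starRingEnd ℂ) p.2 := by
  have hs : (Real.sqrt (c1 + ε * 4 * Complex.normSq p.2 / (1 + ε * Complex.normSq p.1) ^ 2) : ℂ) ≠ 0 :=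
    Complex.ofReal_ne_zero.2 (Real.sqrt_pos.2 ha).ne'
  have hD : ((1 + ε * Complex.normSq p.1 : ℝ) : ℂ) ≠ 0 := Complex.ofReal_ne_zero.2 hz.ne'
  push_cast at hD
  rw [dw, fderiv_wfun ε c1 p hz ha, fderiv_wfun ε c1 p hz ha,
    show (starRingEnd ℂ) p.2 = (p.2.re : ℂ) - p.2.im * I from by simp [Complex.ext_iff]]
  simp only [Complex.one_re, Complex.one_im, Complex.I_re, Complex.I_im, Complex.zero_re,
    Complex.zero_im, mul_one, mul_zero, zero_mul, add_zero, zero_add]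
  set u := Complex.normSq p.1 with hu
  set v := Complex.normSq p.2 with hv
  set S := Real.sqrt (c1 + ε * 4 * v / (1 + ε * u) ^ 2) with hSdef
  clear_value S
  clear hSdef
  push_cast
  field_simp
  ring


lemma dz_wfun' (ε c1 : ℝ) (p : ℂ × ℂ)
    (hz : 0 < (1 + ε * Complex.normSq p.1))
    (ha : 0 < (c1 + ε * 4 * Complex.normSq p.2 / (1 + ε * Complex.normSq p.1) ^ 2)) :
    ((Real.sqrt (c1 + ε * 4 * Complex.normSq p.2 / (1 + ε * Complex.normSq p.1) ^ 2) : ℝ) : ℂ) *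
      (1 + (ε : ℂ) * (p.1 * (starRingEnd ℂ) p.1)) ^ 3 * dz (wfun ε c1) p =
      -((ε : ℂ) * (ε : ℂ)) * 4 * (p.2 * (starRingEnd ℂ) p.2) * (starRingEnd ℂ) p.1 := by
  have hs : (Real.sqrt (c1 + ε * 4 * Complex.normSq p.2 / (1 + ε * Complex.normSq p.1) ^ 2) : ℂ) ≠ 0 :=
    Complex.ofReal_ne_zero.2 (Real.sqrt_pos.2 ha).ne'
  have hD : ((1 + ε * Complex.normSq p.1 : ℝ) : ℂ) ≠ 0 := Complex.ofReal_ne_zero.2 hz.ne'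
  push_cast at hD
  simp only [← Complex.mul_conj] at hD
  rw [dz_wfun ε c1 p hz ha]
  set S := Real.sqrt (c1 + ε * 4 * Complex.normSq p.2 / (1 + ε * Complex.normSq p.1) ^ 2) with hSdef
  clear_value S
  clear hSdef
  push_cast
  simp only [← Complex.mul_conj]
  field_simp [hs, hD]
  have hD' : 1 + (ε : ℂ) * (starRingEnd ℂ) p.1 * p.1 ≠ 0 := by
    rw [mul_assoc, mul_comm ((starRingEnd ℂ) p.1)]; exact hD
  linear_combination (-((ε : ℂ) ^ 2 * (starRingEnd ℂ) p.1 * p.2 * (starRingEnd ℂ) p.2)) *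
    inv_mul_cancel₀ hD'

lemma dw_wfun' (ε c1 : ℝ) (p : ℂ × ℂ)
    (hz : 0 < (1 + ε * Complex.normSq p.1))
    (ha : 0 < (c1 + ε * 4 * Complex.normSq p.2 / (1 + ε * Complex.normSq p.1) ^ 2)) :
    ((Real.sqrt (c1 + ε * 4 * Complex.normSq p.2 / (1 + ε * Complex.normSq p.1) ^ 2) : ℝ) : ℂ) *
      (1 + (ε : ℂ) * (p.1 * (starRingEnd ℂ) p.1)) ^ 2 * dw (wfun ε c1) p =
      (ε : ℂ) * 2 * (starRingEnd ℂ) p.2 := by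
  have hs : (Real.sqrt (c1 + ε * 4 * Complex.normSq p.2 / (1 + ε * Complex.normSq p.1) ^ 2) : ℂ) ≠ 0 :=
    Complex.ofReal_ne_zero.2 (Real.sqrt_pos.2 ha).ne'
  have hD : ((1 + ε * Complex.normSq p.1 : ℝ) : ℂ) ≠ 0 := Complex.ofReal_ne_zero.2 hz.ne'
  push_cast at hD
  simp only [← Complex.mul_conj] at hD
  rw [dw_wfun ε c1 p hz ha]
  set S := Real.sqrt (c1 + ε * 4 * Complex.normSq p.2 / (1 + ε * Complex.normSq p.1) ^ 2) with hSdef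
  clear_value S
  clear hSdef
  push_cast
  simp only [← Complex.mul_conj]
  field_simp [hs, hD]
  have hD' : 1 + (ε : ℂ) * p.1 * (starRingEnd ℂ) p.1 ≠ 0 := by
    rw [mul_assoc]; exact hD
  linear_combination ((ε : ℂ) * (starRingEnd ℂ) p.2) * inv_mul_cancel₀ hD'

/-- The integrability PDE system
`(1±|z|²) ∂a/∂z ± 2wz̄ ∂a/∂w = 0` and
`(1±|z|²)² a² ∂a/∂w ∓ 2w̄ a ± 2zw̄(1±|z|²) ∂a/∂z + 4|w|²|z|² ∂a/∂w = 0`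
is satisfied by `a = sqrt (c1 ± 4|w|²/(1±|z|²)²)` for any constant `c1 > 0`. -/
theorem stmt_14 (ε c1 : ℝ) (hε : ε = 1 ∨ ε = -1) (hc1 : 0 < c1) (p : ℂ × ℂ)
    (hz : 0 < 1 + ε * Complex.normSq p.1)
    (ha : 0 < c1 + ε * 4 * Complex.normSq p.2 / (1 + ε * Complex.normSq p.1) ^ 2) :
    ((1 + ε * Complex.normSq p.1 : ℝ) : ℂ) * dz (wfun ε c1) p +
        (ε : ℂ) * 2 * p.2 * (starRingEnd ℂ) p.1 * dw (wfun ε c1) p = 0 ∧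
    ((1 + ε * Complex.normSq p.1 : ℝ) : ℂ) ^ 2 * (wfun ε c1 p) ^ 2 *
          dw (wfun ε c1) p -
        (ε : ℂ) * 2 * (starRingEnd ℂ) p.2 * wfun ε c1 p +
        (ε : ℂ) * 2 * p.1 * (starRingEnd ℂ) p.2 *
          ((1 + ε * Complex.normSq p.1 : ℝ) : ℂ) * dz (wfun ε c1) p +
        4 * ((Complex.normSq p.2 : ℝ) : ℂ) * ((Complex.normSq p.1 : ℝ) : ℂ) *
          dw (wfun ε c1) p = 0 := by
  have hε2c : (ε : ℂ) * (ε : ℂ) = 1 := by rcases hε with rfl | rfl <;> norm_num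
  have hs : ((Real.sqrt (c1 + ε * 4 * Complex.normSq p.2 / (1 + ε * Complex.normSq p.1) ^ 2) : ℝ) : ℂ) ≠ 0 :=
    Complex.ofReal_ne_zero.2 (Real.sqrt_pos.2 ha).ne'
  have hD : ((1 + ε * Complex.normSq p.1 : ℝ) : ℂ) ≠ 0 := Complex.ofReal_ne_zero.2 hz.ne'
  push_cast at hD
  simp only [← Complex.mul_conj] at hD
  have hq' := dz_wfun' ε c1 p hz ha
  have hw2 := dw_wfun' ε c1 p hz ha
  have hwf : wfun ε c1 p = ((Real.sqrt (c1 + ε * 4 * Complex.normSq p.2 /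
      (1 + ε * Complex.normSq p.1) ^ 2) : ℝ) : ℂ) := rfl
  set S := Real.sqrt (c1 + ε * 4 * Complex.normSq p.2 / (1 + ε * Complex.normSq p.1) ^ 2) with hSdef
  clear_value S
  clear hSdef
  have h3 : ((S : ℝ) : ℂ) * (1 + (ε : ℂ) * (p.1 * (starRingEnd ℂ) p.1)) ^ 3 ≠ 0 :=
    mul_ne_zero hs (pow_ne_zero _ hD)
  constructor
  · apply mul_right_injective₀ h3
    push_cast
    simp only [← Complex.mul_conj]
    linear_combination (1 + (ε : ℂ) * (p.1 * (starRingEnd ℂ) p.1)) * hq' +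
      (ε : ℂ) * 2 * p.2 * ((starRingEnd ℂ) p.1) * (1 + (ε : ℂ) * (p.1 * (starRingEnd ℂ) p.1)) * hw2
  · rw [hwf]
    apply mul_right_injective₀ h3
    push_cast
    simp only [← Complex.mul_conj]
    linear_combination ((ε : ℂ) * 2 * p.1 * ((starRingEnd ℂ) p.2) *
        (1 + (ε : ℂ) * (p.1 * (starRingEnd ℂ) p.1))) * hq' +
      (((S : ℝ) : ℂ) ^ 2 * (1 + (ε : ℂ) * (p.1 * (starRingEnd ℂ) p.1)) ^ 3 +
        4 * (p.2 * (starRingEnd ℂ) p.2) * (p.1 * (starRingEnd ℂ) p.1) *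
          (1 + (ε : ℂ) * (p.1 * (starRingEnd ℂ) p.1))) * hw2 +
      (-8 * (ε : ℂ) * p.1 * ((starRingEnd ℂ) p.1) * p.2 * ((starRingEnd ℂ) p.2) ^ 2 *
        (1 + (ε : ℂ) * (p.1 * (starRingEnd ℂ) p.1))) * hε2c
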